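/- arXiv:cs/0205014 — 13 statements merged into one kernel-verified Lean document; each statement's English description precedes it below -/
import Mathlib

section
/- Let A be a partial approximation operator on L^c and let (a,b) ∈ L^c be A-prudent (A-reliable with a ≤ c↓(b)). Then the pair (c↓(b), c↑(a)) is consistent, i.e., c↓(b) ≤ c↑(a). -/
variable {L : Type*} [CompleteLattice L]

/-- The precision ordering on pairs of lattice elements:
`(x, y) ≤ₚ (x', y')` iff `x ≤ x'` and `y' ≤ y`. -/
def precLE (p q : L × L) : Prop := p.1 ≤ q.1 ∧ q.2 ≤ p.2

/-- A pair `(x, y)` is consistent if `x ≤ y`. -/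
def ConsistentPair (p : L × L) : Prop := p.1 ≤ p.2

/-- A partial approximation operator on the consistent pairs `L^c` of a complete
lattice `L`, given by its two component functions `A1`, `A2`.  It maps consistent
pairs to consistent pairs, is `≤ₚ`-monotone on consistent pairs, and has equal
components on the diagonal. -/
structure PartialApprox (L : Type*) [CompleteLattice L] where
  A1 : L → L → L
  A2 : L → L → L
  cons : ∀ x y : L, x ≤ y → A1 x y ≤ A2 x y
  mono1 : ∀ x y x' y' : L, x ≤ y → x' ≤ y' → x ≤ x' → y' ≤ y → A1 x y ≤ A1 x' y'
  mono2 : ∀ x y x' y' : L, x ≤ y → x' ≤ y' → x ≤ x' → y' ≤ y → A2 x' y' ≤ A2 x y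
  diag : ∀ x : L, A1 x x = A2 x x

namespace PartialApprox

/-- `(a, b)` is `A`-reliable if it is consistent and `(a, b) ≤ₚ A(a, b)`. -/
def reliable (A : PartialApprox L) (a b : L) : Prop :=
  a ≤ b ∧ a ≤ A.A1 a b ∧ A.A2 a b ≤ b

/-- The least fixpoint of `A.A1 (·, b)` on the interval `[⊥, b]`
(for `A`-reliable pairs this least fixpoint exists and equals this `sInf`). -/
def cdown (A : PartialApprox L) (b : L) : L :=
  sInf {z | z ≤ b ∧ A.A1 z b = z}

/-- The least fixpoint of `A.A2 (a, ·)` on the interval `[a, ⊤]`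
(for `A`-reliable pairs this least fixpoint exists and equals this `sInf`). -/
def cup (A : PartialApprox L) (a : L) : L :=
  sInf {z | a ≤ z ∧ A.A2 a z = z}

/-- `(a, b)` is `A`-prudent if it is `A`-reliable and `a ≤ c↓(b)`. -/
def prudent (A : PartialApprox L) (a b : L) : Prop :=
  A.reliable a b ∧ a ≤ A.cdown b

/-- `(x, y)` is a stable fixpoint of `A` if it is `A`-reliable, `x = c↓(y)`
and `y = c↑(x)`. -/
def stableFix (A : PartialApprox L) (x y : L) : Prop :=
  A.reliable x y ∧ x = A.cdown y ∧ y = A.cup x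

end PartialApprox

theorem stmt5 (A : PartialApprox L) (a b : L) (h : A.prudent a b) :
    A.cdown b ≤ A.cup a := by
  obtain ⟨⟨hab, ha1, ha2⟩, _⟩ := h
  -- w : least fixpoint of A2 a · on [a, ⊤], constructed from prefixpoints
  set S2 : Set L := {z | a ≤ z ∧ A.A2 a z ≤ z} with hS2
  set w : L := sInf S2 with hw
  have hbS2 : b ∈ S2 := ⟨hab, ha2⟩
  have haw : a ≤ w := le_sInf fun z hz => hz.1
  have hwb : w ≤ b := sInf_le hbS2
  -- A2 a w ≤ w
  have hpre : A.A2 a w ≤ w := by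
    apply le_sInf
    intro z hz
    exact le_trans (A.mono2 a z a w hz.1 haw le_rfl (sInf_le hz)) hz.2
  -- a ≤ A2 a w
  have haA : a ≤ A.A2 a w := by
    have h1 : A.A1 a b ≤ A.A1 a a := A.mono1 a b a a hab le_rfl le_rfl hab
    have h2 : A.A2 a a ≤ A.A2 a w := A.mono2 a w a a haw le_rfl le_rfl haw
    calc a ≤ A.A1 a b := ha1
      _ ≤ A.A1 a a := h1
      _ = A.A2 a a := A.diag a
      _ ≤ A.A2 a w := h2
  have hwfix : A.A2 a w = w := by
    refine le_antisymm hpre (sInf_le ⟨haA, ?_⟩)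
    exact A.mono2 a w a (A.A2 a w) haw haA le_rfl hpre
  -- cup a = w
  have hcup : A.cup a = w := by
    have h1 : w ∈ {z | a ≤ z ∧ A.A2 a z = z} := ⟨haw, hwfix⟩
    apply le_antisymm (sInf_le h1)
    apply le_sInf
    intro z hz
    exact sInf_le ⟨hz.1, le_of_eq hz.2⟩
  -- A1 w b ≤ w
  have hA1w : A.A1 w b ≤ w := by
    calc A.A1 w b ≤ A.A1 w w := A.mono1 w b w w hwb le_rfl le_rfl hwb
      _ = A.A2 w w := A.diag w
      _ ≤ A.A2 a w := A.mono2 a w w w haw le_rfl haw le_rfl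
      _ = w := hwfix
  -- p : least fixpoint of A1 · b below w
  set S1 : Set L := {z | z ≤ w ∧ A.A1 z b ≤ z} with hS1
  set p : L := sInf S1 with hp
  have hpw : p ≤ w := sInf_le ⟨le_rfl, hA1w⟩
  have hppre : A.A1 p b ≤ p := by
    apply le_sInf
    intro z hz
    exact le_trans
      (A.mono1 p b z b (le_trans hpw hwb) (le_trans hz.1 hwb) (sInf_le hz) le_rfl) hz.2
  have hpfix : A.A1 p b = p := by
    refine le_antisymm hppre (sInf_le ⟨le_trans hppre hpw, ?_⟩)
    exact A.mono1 (A.A1 p b) b p b (le_trans (le_trans hppre hpw) hwb)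
      (le_trans hpw hwb) hppre le_rfl
  calc A.cdown b ≤ p := sInf_le ⟨le_trans hpw hwb, hpfix⟩
    _ ≤ w := hpw
    _ = A.cup a := hcup.symm
end

section
/- Let A be a partial approximation operator on L^c and (a,b) an A-prudent pair. Then (a,b) ≤_p (c↓(b), c↑(a)), and the pair (c↓(b), c↑(a)) is itself A-reliable. -/
variable {L : Type*} [CompleteLattice L]

section Aux

variable (A : PartialApprox L) {a b : L}

lemma aux_Abb_le (hrel : A.reliable a b) : A.A1 b b ≤ b := by
  obtain ⟨hab, _, h2⟩ := hrel
  calc A.A1 b b = A.A2 b b := A.diag b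
    _ ≤ A.A2 a b := A.mono2 a b b b hab le_rfl hab le_rfl
    _ ≤ b := h2

/-- the sInf of prefixpoints of `A1 · b` below `b` -/
lemma aux_cdown (hrel : A.reliable a b) :
    A.cdown b ≤ b ∧ A.A1 (A.cdown b) b = A.cdown b ∧
      ∀ z, z ≤ b → A.A1 z b ≤ z → A.cdown b ≤ z := by
  set S : Set L := {z | z ≤ b ∧ A.A1 z b ≤ z} with hS
  set c : L := sInf S with hc
  have hcb : c ≤ b := sInf_le ⟨le_rfl, aux_Abb_le A hrel⟩
  have hpre : A.A1 c b ≤ c := by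
    refine le_sInf fun z hz => ?_
    exact le_trans (A.mono1 c b z b hcb hz.1 (sInf_le hz) le_rfl) hz.2
  have hAcb : A.A1 c b ≤ b := hpre.trans hcb
  have hmem : A.A1 c b ∈ S := ⟨hAcb, A.mono1 (A.A1 c b) b c b hAcb hcb hpre le_rfl⟩
  have hfix : A.A1 c b = c := le_antisymm hpre (sInf_le hmem)
  have h1 : A.cdown b ≤ c := sInf_le ⟨hcb, hfix⟩
  have h2 : c ≤ A.cdown b := le_sInf fun z hz => sInf_le ⟨hz.1, hz.2.le⟩
  have : A.cdown b = c := le_antisymm h1 h2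
  rw [this]; exact ⟨hcb, hfix, fun z hz1 hz2 => sInf_le ⟨hz1, hz2⟩⟩

lemma aux_cup (hrel : A.reliable a b) :
    a ≤ A.cup a ∧ A.cup a ≤ b ∧ A.A2 a (A.cup a) = A.cup a := by
  obtain ⟨hab, h1, h2⟩ := hrel
  set S : Set L := {z | a ≤ z ∧ z ≤ b ∧ A.A2 a z ≤ z} with hS
  set u : L := sInf S with hu
  have hbS : b ∈ S := ⟨hab, le_rfl, h2⟩
  have hub : u ≤ b := sInf_le hbS
  have hau : a ≤ u := le_sInf fun z hz => hz.1
  have hpre : A.A2 a u ≤ u := by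
    refine le_sInf fun z hz => ?_
    exact le_trans (A.mono2 a z a u hz.1 hau le_rfl (sInf_le hz)) hz.2.2
  have haAu : a ≤ A.A2 a u := by
    calc a ≤ A.A1 a b := h1
      _ ≤ A.A1 a u := A.mono1 a b a u hab hau le_rfl hub
      _ ≤ A.A2 a u := A.cons a u hau
  have hAub : A.A2 a u ≤ b := hpre.trans hub
  have hmem : A.A2 a u ∈ S :=
    ⟨haAu, hAub, A.mono2 a u a (A.A2 a u) hau haAu le_rfl hpre⟩
  have hfix : A.A2 a u = u := le_antisymm hpre (sInf_le hmem)
  have hle : A.cup a ≤ u := sInf_le ⟨hau, hfix⟩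
  have hge : u ≤ A.cup a := by
    refine le_sInf fun z hz => ?_
    -- z is a fixpoint with a ≤ z; then z ⊓ b ∈ S
    have haz : a ≤ z := hz.1
    have h1' : A.A2 a (z ⊓ b) ≤ z := by
      calc A.A2 a (z ⊓ b) ≤ A.A2 a z :=
            A.mono2 a z a (z ⊓ b) haz (le_inf haz hab) le_rfl inf_le_left
        _ = z := hz.2
    have h2' : A.A2 a (z ⊓ b) ≤ b := by
      calc A.A2 a (z ⊓ b) ≤ A.A2 a b :=
            A.mono2 a b a (z ⊓ b) hab (le_inf haz hab) le_rfl inf_le_right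
        _ ≤ b := h2
    have : z ⊓ b ∈ S := ⟨le_inf haz hab, inf_le_right, le_inf h1' h2'⟩
    exact (sInf_le this).trans inf_le_left
  have : A.cup a = u := le_antisymm hle hge
  rw [this]; exact ⟨hau, hub, hfix⟩

end Aux

theorem stmt6 (A : PartialApprox L) (a b : L) (h : A.prudent a b) :
    precLE (a, b) (A.cdown b, A.cup a) ∧ A.reliable (A.cdown b) (A.cup a) := by
  obtain ⟨hrel, had⟩ := h
  obtain ⟨hab, h1, h2⟩ := hrel
  obtain ⟨hdb, hdfix, hdleast⟩ := aux_cdown A ⟨hab, h1, h2⟩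
  obtain ⟨hau, hub, hufix⟩ := aux_cup A ⟨hab, h1, h2⟩
  set d := A.cdown b
  set u := A.cup a
  -- d ≤ u : u is a prefixpoint of A1 · b
  have hA1ub : A.A1 u b ≤ u := by
    calc A.A1 u b ≤ A.A1 u u := A.mono1 u b u u hub le_rfl le_rfl hub
      _ = A.A2 u u := A.diag u
      _ ≤ A.A2 a u := A.mono2 a u u u hau le_rfl hau le_rfl
      _ = u := hufix
  have hdu : d ≤ u := hdleast u hub hA1ub
  have hdA1 : d ≤ A.A1 d u := by
    calc d = A.A1 d b := hdfix.symm
      _ ≤ A.A1 d u := A.mono1 d b d u hdb hdu le_rfl hub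
  have hA2u : A.A2 d u ≤ u := by
    calc A.A2 d u ≤ A.A2 a u := A.mono2 a u d u hau hdu had le_rfl
      _ = u := hufix
  exact ⟨⟨had, hub⟩, hdu, hdA1, hA2u⟩
end

section
/- Let A be a partial approximation operator on L^c and (a,b) an A-prudent pair. Then the pair (c↓(b), c↑(a)) is A-prudent, i.e., c↓(b) ≤ lfp of A^1(·, c↑(a)). -/
variable {L : Type*} [CompleteLattice L]

/-- Knaster–Tarski style: a monotone-on-`[lo,hi]` map with `lo ≤ f lo` and
`f hi ≤ hi` has a fixpoint in `[lo, hi]`. -/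
lemma exists_fix (f : L → L) (lo hi : L) (hlh : lo ≤ hi)
    (hmono : ∀ x y, lo ≤ x → x ≤ y → y ≤ hi → f x ≤ f y)
    (hlo : lo ≤ f lo) (hhi : f hi ≤ hi) : ∃ e, lo ≤ e ∧ e ≤ hi ∧ f e = e := by
  set S := {z | lo ≤ z ∧ z ≤ hi ∧ f z ≤ z} with hS
  have hhiS : hi ∈ S := ⟨hlh, le_rfl, hhi⟩
  set e := sInf S with he
  have hle : lo ≤ e := le_sInf fun z hz => hz.1
  have heh : e ≤ hi := sInf_le hhiS
  have hfe : f e ≤ e := le_sInf fun z hz =>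
    (hmono e z hle (sInf_le hz) hz.2.1).trans hz.2.2
  have hlofe : lo ≤ f e := hlo.trans (hmono lo e le_rfl hle heh)
  have hef : e ≤ f e := sInf_le ⟨hlofe, hfe.trans heh, hmono (f e) e hlofe hfe heh⟩
  exact ⟨e, hle, heh, le_antisymm hfe hef⟩

theorem stmt7 (A : PartialApprox L) (a b : L) (h : A.prudent a b) :
    A.prudent (A.cdown b) (A.cup a) := by
  obtain ⟨⟨hab, haA1, hA2b⟩, hac⟩ := h
  set c := A.cdown b with hc
  set d := A.cup a with hd
  -- basic monotonicity facts
  -- d := cup a : first, a fixpoint of A.A2 a · exists in [a, b]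
  have haAaa : a ≤ A.A2 a a := by
    have h1 : A.A1 a b ≤ A.A1 a a := A.mono1 a b a a hab le_rfl le_rfl hab
    calc a ≤ A.A1 a b := haA1
    _ ≤ A.A1 a a := h1
    _ ≤ A.A2 a a := A.cons a a le_rfl
  have gmono : ∀ x y, a ≤ x → x ≤ y → y ≤ b → A.A2 a x ≤ A.A2 a y := fun x y hax hxy _ =>
    A.mono2 a y a x (hax.trans hxy) hax le_rfl hxy
  obtain ⟨dstar, hads, hdsb, hdsfix⟩ :=
    exists_fix (fun z => A.A2 a z) a b hab gmono haAaa hA2b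
  have hdds : d ≤ dstar := sInf_le ⟨hads, hdsfix⟩
  have hdb : d ≤ b := hdds.trans hdsb
  have had : a ≤ d := le_sInf fun z hz => hz.1
  have hA2ad : A.A2 a d ≤ d := le_sInf fun z hz =>
    (A.mono2 a z a d hz.1 had le_rfl (sInf_le hz)).trans (le_of_eq hz.2)
  -- d is a fixpoint: A.A2 a d = d
  have haAad : a ≤ A.A2 a d := by
    have h1 : A.A1 a b ≤ A.A1 a d := A.mono1 a b a d hab had le_rfl hdb
    exact haA1.trans (h1.trans (A.cons a d had))
  have hdfix : A.A2 a d = d := by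
    obtain ⟨e, hae, hed, hefix⟩ := exists_fix (fun z => A.A2 a z) a d had
      (fun x y hax hxy hyd => gmono x y hax hxy (hyd.trans hdb)) haAaa hA2ad
    have hde : d ≤ e := sInf_le (s := {z | a ≤ z ∧ A.A2 a z = z}) ⟨hae, hefix⟩
    exact le_antisymm hA2ad (hde.trans (hefix.symm.le.trans (gmono e d hae hed hdb)))
  -- c := cdown b : a fixpoint of A.A1 · b exists in [a, b]
  have fmono : ∀ x y, x ≤ y → y ≤ b → A.A1 x b ≤ A.A1 y b := fun x y hxy hyb =>
    A.mono1 x b y b (hxy.trans hyb) hyb hxy le_rfl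
  have hAbb : A.A1 b b ≤ b := by
    have := A.mono2 a b b b hab le_rfl hab le_rfl
    calc A.A1 b b = A.A2 b b := A.diag b
    _ ≤ A.A2 a b := this
    _ ≤ b := hA2b
  obtain ⟨cstar, hacs, hcsb, hcsfix⟩ :=
    exists_fix (fun z => A.A1 z b) a b hab (fun x y _ hxy hyb => fmono x y hxy hyb) haA1 hAbb
  have hccs : c ≤ cstar := sInf_le ⟨hcsb, hcsfix⟩
  have hcb : c ≤ b := hccs.trans hcsb
  have hA1cb : A.A1 c b ≤ c := le_sInf fun z hz =>
    (fmono c z (sInf_le hz) hz.1).trans (le_of_eq hz.2)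
  have haA1cb : a ≤ A.A1 c b := haA1.trans (fmono a c hac hcb)
  have hcfix : A.A1 c b = c := by
    obtain ⟨e, hae, hec, hefix⟩ := exists_fix (fun z => A.A1 z b) a c hac
      (fun x y _ hxy hyc => fmono x y hxy (hyc.trans hcb)) haA1 hA1cb
    have hce : c ≤ e := sInf_le (s := {z | z ≤ b ∧ A.A1 z b = z}) ⟨hec.trans hcb, hefix⟩
    exact le_antisymm hA1cb (hce.trans (hefix.symm.le.trans (fmono e c hec hcb)))
  -- c ≤ d
  have hAdb : A.A1 d b ≤ d := by
    have h1 : A.A1 d b ≤ A.A1 d d := A.mono1 d b d d hdb le_rfl le_rfl hdb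
    have h2 : A.A2 d d ≤ A.A2 a d := A.mono2 a d d d had le_rfl had le_rfl
    calc A.A1 d b ≤ A.A1 d d := h1
    _ = A.A2 d d := A.diag d
    _ ≤ A.A2 a d := h2
    _ = d := hdfix
  have hcd : c ≤ d := by
    obtain ⟨e, hae, hed, hefix⟩ := exists_fix (fun z => A.A1 z b) a d had
      (fun x y _ hxy hyd => fmono x y hxy (hyd.trans hdb)) haA1 hAdb
    exact (sInf_le (s := {z | z ≤ b ∧ A.A1 z b = z}) ⟨hed.trans hdb, hefix⟩).trans hed
  refine ⟨⟨hcd, ?_, ?_⟩, ?_⟩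
  · -- c ≤ A.A1 c d
    have : A.A1 c b ≤ A.A1 c d := A.mono1 c b c d hcb hcd le_rfl hdb
    exact le_of_eq hcfix.symm |>.trans this
  · -- A.A2 c d ≤ d
    have : A.A2 c d ≤ A.A2 a d := A.mono2 a d c d had hcd hac le_rfl
    exact this.trans (le_of_eq hdfix)
  · -- c ≤ cdown d
    refine le_sInf fun z hz => ?_
    obtain ⟨hzd, hzfix⟩ := hz
    have hzb : z ≤ b := hzd.trans hdb
    have hAzb : A.A1 z b ≤ z := by
      have h1 : A.A1 z b ≤ A.A1 z d := A.mono1 z b z d hzb hzd le_rfl hdb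
      exact h1.trans (le_of_eq hzfix)
    obtain ⟨e, _, hez, hefix⟩ := exists_fix (fun w => A.A1 w b) ⊥ z bot_le
      (fun x y _ hxy hyz => fmono x y hxy (hyz.trans hzb)) bot_le hAzb
    exact (sInf_le (s := {z | z ≤ b ∧ A.A1 z b = z}) ⟨hez.trans hzb, hefix⟩).trans hez
end

section
/- For an A-prudent pair (a,b), the stable revision is at least as precise as the direct revision: A(a,b) ≤_p (c↓(b), c↑(a)), i.e., A^1(a,b) ≤ c↓(b) and c↑(a) ≤ A^2(a,b). -/
variable {L : Type*} [CompleteLattice L]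

theorem stmt8 (A : PartialApprox L) (a b : L) (h : A.prudent a b) :
    A.A1 a b ≤ A.cdown b ∧ A.cup a ≤ A.A2 a b := by
  obtain ⟨⟨hab, ha1, ha2⟩, hpr⟩ := h
  -- Part 1
  set T : Set L := {z | z ≤ b ∧ A.A1 z b ≤ z} with hT
  set c' : L := sInf T with hc'
  have hbT : b ∈ T := by
    refine ⟨le_rfl, ?_⟩
    calc A.A1 b b = A.A2 b b := A.diag b
      _ ≤ A.A2 a b := A.mono2 a b b b hab le_rfl hab le_rfl
      _ ≤ b := ha2
  have hc'b : c' ≤ b := sInf_le hbT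
  have hpre : A.A1 c' b ≤ c' := by
    refine le_sInf fun z hz => ?_
    calc A.A1 c' b ≤ A.A1 z b := A.mono1 c' b z b hc'b hz.1 (sInf_le hz) le_rfl
      _ ≤ z := hz.2
  have hA1b : A.A1 c' b ≤ b := hpre.trans hc'b
  have hfix : A.A1 c' b = c' := by
    refine le_antisymm hpre (sInf_le ⟨hA1b, ?_⟩)
    exact A.mono1 (A.A1 c' b) b c' b hA1b hc'b hpre le_rfl
  have hc'S : c' ∈ {z | z ≤ b ∧ A.A1 z b = z} := ⟨hc'b, hfix⟩
  have hcd_le : A.cdown b ≤ c' := sInf_le hc'S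
  have hcd_b : A.cdown b ≤ b := hcd_le.trans hc'b
  have part1 : A.A1 a b ≤ A.cdown b := by
    have hcd_pre : A.A1 (A.cdown b) b ≤ A.cdown b := by
      refine le_sInf fun z hz => ?_
      calc A.A1 (A.cdown b) b ≤ A.A1 z b :=
            A.mono1 (A.cdown b) b z b hcd_b hz.1 (sInf_le hz) le_rfl
        _ = z := hz.2
    calc A.A1 a b ≤ A.A1 (A.cdown b) b := A.mono1 a b (A.cdown b) b hab hcd_b hpr le_rfl
      _ ≤ A.cdown b := hcd_pre
  -- Part 2
  set U : Set L := {z | a ≤ z ∧ A.A2 a z ≤ z} with hU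
  set d : L := sInf U with hd
  have haA2 : a ≤ A.A2 a b := ha1.trans (A.cons a b hab)
  have hA2U : A.A2 a b ∈ U := by
    refine ⟨haA2, ?_⟩
    exact A.mono2 a b a (A.A2 a b) hab haA2 le_rfl ha2
  have had : a ≤ d := le_sInf fun z hz => hz.1
  have hdA2 : d ≤ A.A2 a b := sInf_le hA2U
  have hdb : d ≤ b := hdA2.trans ha2
  have hdpre : A.A2 a d ≤ d := by
    refine le_sInf fun z hz => ?_
    calc A.A2 a d ≤ A.A2 a z := A.mono2 a z a d hz.1 had le_rfl (sInf_le hz)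
      _ ≤ z := hz.2
  have haA2d : a ≤ A.A2 a d := by
    calc a ≤ A.A1 a b := ha1
      _ ≤ A.A1 a d := A.mono1 a b a d hab had le_rfl hdb
      _ ≤ A.A2 a d := A.cons a d had
  have hdfix : A.A2 a d = d := by
    refine le_antisymm hdpre (sInf_le ⟨haA2d, ?_⟩)
    exact A.mono2 a d a (A.A2 a d) had haA2d le_rfl hdpre
  have part2 : A.cup a ≤ A.A2 a b :=
    le_trans (sInf_le (⟨had, hdfix⟩ : d ∈ {z | a ≤ z ∧ A.A2 a z = z})) hdA2
  exact ⟨part1, part2⟩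
end

section
/- Let A be a partial approximation operator on L^c. If (a,b) is A-reliable, (c,d) is A-prudent, and (a,b) ≤_p (c,d), then (c↓(b), c↑(a)) ≤_p (c↓(d), c↑(c)): the stable revision operator is monotone with respect to the precision order. -/
variable {L : Type*} [CompleteLattice L]

lemma down_char (A : PartialApprox L) {a b : L} (h : A.reliable a b) :
    A.cdown b ≤ b ∧ A.A1 (A.cdown b) b = A.cdown b ∧
      ∀ z, z ≤ b → A.A1 z b ≤ z → A.cdown b ≤ z := by
  obtain ⟨hab, _, h2⟩ := h
  set S : Set L := {z | z ≤ b ∧ A.A1 z b ≤ z} with hS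
  set m := sInf S with hm
  have hbS : b ∈ S := ⟨le_rfl, by
    calc A.A1 b b = A.A2 b b := A.diag b
      _ ≤ A.A2 a b := A.mono2 a b b b hab le_rfl hab le_rfl
      _ ≤ b := h2⟩
  have hmb : m ≤ b := sInf_le hbS
  have hpre : A.A1 m b ≤ m := by
    apply le_sInf
    intro z hz
    calc A.A1 m b ≤ A.A1 z b := A.mono1 m b z b hmb hz.1 (sInf_le hz) le_rfl
      _ ≤ z := hz.2
  have hfix : A.A1 m b = m := by
    refine le_antisymm hpre (sInf_le ⟨hpre.trans hmb, ?_⟩)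
    exact A.mono1 _ b m b (hpre.trans hmb) hmb hpre le_rfl
  have hcm : A.cdown b = m := by
    apply le_antisymm (sInf_le (show m ∈ {z | z ≤ b ∧ A.A1 z b = z} from ⟨hmb, hfix⟩))
    exact le_sInf fun z hz => sInf_le ⟨hz.1, le_of_eq hz.2⟩
  exact ⟨hcm ▸ hmb, by rw [hcm]; exact hfix, fun z hz1 hz2 => hcm ▸ sInf_le ⟨hz1, hz2⟩⟩

lemma up_char (A : PartialApprox L) {a b : L} (h : A.reliable a b) :
    a ≤ A.cup a ∧ A.A2 a (A.cup a) = A.cup a ∧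
      ∀ z, a ≤ z → A.A2 a z ≤ z → A.cup a ≤ z := by
  obtain ⟨hab, h1, _⟩ := h
  set S : Set L := {z | a ≤ z ∧ A.A2 a z ≤ z} with hS
  set m := sInf S with hm
  have ham : a ≤ m := le_sInf fun z hz => hz.1
  have haz : ∀ z, a ≤ z → a ≤ A.A2 a z := by
    intro z hz
    calc a ≤ A.A1 a b := h1
      _ ≤ A.A1 a a := A.mono1 a b a a hab le_rfl le_rfl hab
      _ = A.A2 a a := A.diag a
      _ ≤ A.A2 a z := A.mono2 a z a a hz le_rfl le_rfl hz
  have hpre : A.A2 a m ≤ m := by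
    apply le_sInf
    intro z hz
    calc A.A2 a m ≤ A.A2 a z := A.mono2 a z a m hz.1 ham le_rfl (sInf_le hz)
      _ ≤ z := hz.2
  have hfix : A.A2 a m = m := by
    refine le_antisymm hpre (sInf_le ⟨haz m ham, ?_⟩)
    exact A.mono2 a m a (A.A2 a m) ham (haz m ham) le_rfl hpre
  have hcm : A.cup a = m := by
    apply le_antisymm (sInf_le (show m ∈ {z | a ≤ z ∧ A.A2 a z = z} from ⟨ham, hfix⟩))
    exact le_sInf fun z hz => sInf_le ⟨hz.1, le_of_eq hz.2⟩
  exact ⟨hcm ▸ ham, by rw [hcm]; exact hfix, fun z hz1 hz2 => hcm ▸ sInf_le ⟨hz1, hz2⟩⟩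

theorem stmt9 (A : PartialApprox L) (a b c d : L)
    (hab : A.reliable a b) (hcd : A.prudent c d)
    (h1 : a ≤ c) (h2 : d ≤ b) :
    A.cdown b ≤ A.cdown d ∧ A.cup c ≤ A.cup a := by
  obtain ⟨hcdrel, hprud⟩ := hcd
  obtain ⟨hdb, hfixb, hminb⟩ := down_char A hab
  obtain ⟨hdd, hfixd, hmind⟩ := down_char A hcdrel
  obtain ⟨hau, hfixa, hmina⟩ := up_char A hab
  obtain ⟨hcu, hfixc, hminc⟩ := up_char A hcdrel
  have hcd' : c ≤ d := hcdrel.1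
  have had : a ≤ d := h1.trans hcd'
  have part1 : A.cdown b ≤ A.cdown d := by
    apply hminb (A.cdown d) (hdd.trans h2)
    calc A.A1 (A.cdown d) b ≤ A.A1 (A.cdown d) d :=
          A.mono1 _ b _ d (hdd.trans h2) hdd le_rfl h2
      _ = A.cdown d := hfixd
  have key : A.cdown d ≤ A.cup a := by
    have h3 : A.cdown d ≤ A.cup a ⊓ d := by
      apply hmind _ inf_le_right
      refine le_inf ?_ ?_
      · calc A.A1 (A.cup a ⊓ d) d ≤ A.A1 (A.cup a ⊓ d) (A.cup a ⊓ d) :=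
              A.mono1 _ d _ _ inf_le_right le_rfl le_rfl inf_le_right
          _ = A.A2 (A.cup a ⊓ d) (A.cup a ⊓ d) := A.diag _
          _ ≤ A.A2 a (A.cup a) :=
              A.mono2 a (A.cup a) _ _ hau le_rfl (le_inf hau had) inf_le_left
          _ = A.cup a := hfixa
      · calc A.A1 (A.cup a ⊓ d) d ≤ A.A1 d d :=
              A.mono1 _ d d d inf_le_right le_rfl inf_le_right le_rfl
          _ = A.A2 d d := A.diag d
          _ ≤ A.A2 c d := A.mono2 c d d d hcd' le_rfl hcd' le_rfl
          _ ≤ d := hcdrel.2.2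
    exact h3.trans inf_le_left
  have hca : c ≤ A.cup a := hprud.trans key
  have part2 : A.cup c ≤ A.cup a := by
    apply hminc _ hca
    calc A.A2 c (A.cup a) ≤ A.A2 a (A.cup a) :=
          A.mono2 a (A.cup a) c (A.cup a) hau hca h1 le_rfl
      _ = A.cup a := hfixa
  exact ⟨part1, part2⟩
end

section
/- Let A be a partial approximation operator on L^c, let (c,d) be a stable fixpoint of A (hence A-prudent), and let (a,b) be A-reliable with (a,b) ≤_p (c,d). Then (c↓(b), c↑(a)) ≤_p (c,d). -/
variable {L : Type*} [CompleteLattice L]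

theorem stmt10 (A : PartialApprox L) (a b c d : L)
    (hcd : A.stableFix c d) (hab : A.reliable a b)
    (h1 : a ≤ c) (h2 : d ≤ b) :
    A.cdown b ≤ c ∧ d ≤ A.cup a := by
  obtain ⟨⟨hcd1, hcd2, hcd3⟩, hc, hd⟩ := hcd
  obtain ⟨hab1, hab2, hab3⟩ := hab
  have had : a ≤ d := h1.trans hcd1
  have hcb : c ≤ b := hcd1.trans h2
  -- c is below every fixpoint of A1 · d that is ≤ d
  have hczd : ∀ z, z ≤ d → A.A1 z d = z → c ≤ z := fun z hz1 hz2 => by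
    rw [hc, PartialApprox.cdown]; exact sInf_le ⟨hz1, hz2⟩
  -- c is a prefixpoint of A1 · d
  have hcpre : A.A1 c d ≤ c := by
    have : A.A1 c d ≤ A.cdown d := by
      rw [PartialApprox.cdown]
      refine le_sInf fun z hz => ?_
      exact (A.mono1 c d z d hcd1 hz.1 (hczd z hz.1 hz.2) le_rfl).trans hz.2.le
    exact this.trans hc.ge
  -- Lemma A : A1 c d = c
  have hfixc : A.A1 c d = c := by
    set P : Set L := {z | z ≤ d ∧ A.A1 z d ≤ z} with hP
    set c' : L := sInf P with hc'
    have hc'c : c' ≤ c := sInf_le ⟨hcd1, hcpre⟩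
    have hc'd : c' ≤ d := hc'c.trans hcd1
    have hpre' : A.A1 c' d ≤ c' :=
      le_sInf fun z hz => (A.mono1 c' d z d hc'd hz.1 (sInf_le hz) le_rfl).trans hz.2
    have hA'd : A.A1 c' d ≤ d := hpre'.trans hc'd
    have hmem : A.A1 c' d ∈ P := ⟨hA'd, A.mono1 _ d c' d hA'd hc'd hpre' le_rfl⟩
    have hfix' : c' ≤ A.A1 c' d := sInf_le hmem
    have hce : c ≤ c' := hczd c' hc'd (le_antisymm hpre' hfix')
    have : c' = c := le_antisymm hc'c hce
    rw [← this]; exact le_antisymm hpre' hfix'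
  -- Goal 1 : cdown b ≤ c
  have goal1 : A.cdown b ≤ c := by
    set T' : Set L := {z | a ≤ z ∧ z ≤ c ∧ A.A1 z b ≤ z} with hT'
    set u : L := sInf T' with hu
    have hcmem : c ∈ T' := ⟨h1, le_rfl, (A.mono1 c b c d hcb hcd1 le_rfl h2).trans hcpre⟩
    have huc : u ≤ c := sInf_le hcmem
    have hau : a ≤ u := le_sInf fun z hz => hz.1
    have hub : u ≤ b := huc.trans hcb
    have hupre : A.A1 u b ≤ u :=
      le_sInf fun z hz => (A.mono1 u b z b hub (hz.2.1.trans hcb) (sInf_le hz) le_rfl).trans hz.2.2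
    have haAu : a ≤ A.A1 u b := hab2.trans (A.mono1 a b u b hab1 hub hau le_rfl)
    have hmemu : A.A1 u b ∈ T' :=
      ⟨haAu, hupre.trans huc, A.mono1 _ b u b ((hupre.trans huc).trans hcb) hub hupre le_rfl⟩
    have hufix : u ≤ A.A1 u b := sInf_le hmemu
    have : A.cdown b ≤ u := by
      rw [PartialApprox.cdown]; exact sInf_le ⟨hub, le_antisymm hupre hufix⟩
    exact this.trans huc
  -- q : the least fixpoint of A2 a · on [a, b]
  set Qq : Set L := {y | a ≤ y ∧ y ≤ b ∧ A.A2 a y ≤ y} with hQq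
  set q : L := sInf Qq with hq
  have hbmem : b ∈ Qq := ⟨hab1, le_rfl, hab3⟩
  have haq : a ≤ q := le_sInf fun y hy => hy.1
  have hqb : q ≤ b := sInf_le hbmem
  have hqpre : A.A2 a q ≤ q :=
    le_sInf fun y hy => (A.mono2 a y a q hy.1 haq le_rfl (sInf_le hy)).trans hy.2.2
  have haAq : a ≤ A.A2 a q :=
    hab2.trans ((A.mono1 a b a q hab1 haq le_rfl hqb).trans (A.cons a q haq))
  have hmemAq : A.A2 a q ∈ Qq :=
    ⟨haAq, hqpre.trans hqb, A.mono2 a q a (A.A2 a q) haq haAq le_rfl hqpre⟩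
  have hqfix : q ≤ A.A2 a q := sInf_le hmemAq
  have hqeq : A.A2 a q = q := le_antisymm hqpre hqfix
  -- c ≤ q
  have hA1dd : A.A1 d d ≤ d := by
    rw [A.diag d]; exact (A.mono2 c d d d hcd1 le_rfl hcd1 le_rfl).trans hcd3
  have hcq : c ≤ q := by
    set T : Set L := {z | a ≤ z ∧ z ≤ d ∧ A.A1 z d ≤ z} with hT
    set c2 : L := sInf T with hc2
    have hdmem : d ∈ T := ⟨had, le_rfl, hA1dd⟩
    have hac2 : a ≤ c2 := le_sInf fun z hz => hz.1
    have hc2d : c2 ≤ d := sInf_le hdmem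
    have hc2pre : A.A1 c2 d ≤ c2 :=
      le_sInf fun z hz => (A.mono1 c2 d z d hc2d hz.2.1 (sInf_le hz) le_rfl).trans hz.2.2
    have haAc2 : a ≤ A.A1 c2 d := hab2.trans (A.mono1 a b c2 d hab1 hc2d hac2 h2)
    have hmemAc2 : A.A1 c2 d ∈ T :=
      ⟨haAc2, hc2pre.trans hc2d, A.mono1 _ d c2 d (hc2pre.trans hc2d) hc2d hc2pre le_rfl⟩
    have hc2fix : c2 ≤ A.A1 c2 d := sInf_le hmemAc2
    have hcc2 : c ≤ c2 := hczd c2 hc2d (le_antisymm hc2pre hc2fix)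
    have hadq : a ≤ d ⊓ q := le_inf had haq
    have hupper : A.A1 (d ⊓ q) d ≤ d :=
      (A.mono1 (d ⊓ q) d d d inf_le_left le_rfl inf_le_left le_rfl).trans hA1dd
    have hqside : A.A1 (d ⊓ q) d ≤ q := by
      have s1 : A.A1 (d ⊓ q) d ≤ A.A1 (d ⊓ q) (d ⊓ q) :=
        A.mono1 (d ⊓ q) d (d ⊓ q) (d ⊓ q) inf_le_left le_rfl le_rfl inf_le_left
      have s2 : A.A1 (d ⊓ q) (d ⊓ q) = A.A2 (d ⊓ q) (d ⊓ q) := A.diag _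
      have s3 : A.A2 (d ⊓ q) (d ⊓ q) ≤ A.A2 a (d ⊓ q) :=
        A.mono2 a (d ⊓ q) (d ⊓ q) (d ⊓ q) hadq le_rfl hadq le_rfl
      have s4 : A.A2 a (d ⊓ q) ≤ A.A2 a q :=
        A.mono2 a q a (d ⊓ q) haq hadq le_rfl inf_le_right
      exact (((s1.trans s2.le).trans s3).trans s4).trans hqeq.le
    have hmemdq : d ⊓ q ∈ T := ⟨hadq, inf_le_left, le_inf hupper hqside⟩
    exact hcc2.trans ((sInf_le hmemdq).trans inf_le_right)
  -- d = sInf of prefixpoints of A2 c · above c, hence d ≤ q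
  have hdq : d ≤ q := by
    set Q : Set L := {w | c ≤ w ∧ A.A2 c w ≤ w} with hQ
    set qt : L := sInf Q with hqt
    have hdmem : d ∈ Q := ⟨hcd1, hcd3⟩
    have hqtd : qt ≤ d := sInf_le hdmem
    have hcqt : c ≤ qt := le_sInf fun w hw => hw.1
    have hqtpre : A.A2 c qt ≤ qt :=
      le_sInf fun w hw => (A.mono2 c w c qt hw.1 hcqt le_rfl (sInf_le hw)).trans hw.2
    have hcAqt : c ≤ A.A2 c qt :=
      (hfixc.ge.trans (A.mono1 c d c qt hcd1 hcqt le_rfl hqtd)).trans (A.cons c qt hcqt)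
    have hmemA : A.A2 c qt ∈ Q := ⟨hcAqt, A.mono2 c qt c (A.A2 c qt) hcqt hcAqt le_rfl hqtpre⟩
    have hqtfix : qt ≤ A.A2 c qt := sInf_le hmemA
    have hdqt : d ≤ qt := by
      have : A.cup c ≤ qt := by
        rw [PartialApprox.cup]; exact sInf_le ⟨hcqt, le_antisymm hqtpre hqtfix⟩
      exact hd.le.trans this
    have hqmem : q ∈ Q := ⟨hcq, (A.mono2 a q c q haq hcq h1 le_rfl).trans hqeq.le⟩
    exact hdqt.trans (sInf_le hqmem)
  refine ⟨goal1, ?_⟩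
  rw [PartialApprox.cup]
  refine le_sInf fun z hz => ?_
  have hzb : z ⊓ b ∈ Qq := by
    refine ⟨le_inf hz.1 hab1, inf_le_right, le_inf ?_ ?_⟩
    · exact (A.mono2 a z a (z ⊓ b) hz.1 (le_inf hz.1 hab1) le_rfl inf_le_left).trans hz.2.le
    · exact (A.mono2 a b a (z ⊓ b) hab1 (le_inf hz.1 hab1) le_rfl inf_le_right).trans hab3
  exact hdq.trans ((sInf_le hzb).trans inf_le_left)
end

section
/- Let A be a partial approximation operator on L^c and {(a^α, b^α)}_α a chain of A-prudent pairs. Then its least upper bound (lub({a^α}), glb({b^α})) in (L^c, ≤_p) is A-prudent. -/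
variable {L : Type*} [CompleteLattice L]

/-- `cdown` is antitone with respect to precision: a larger `b` gives a smaller `cdown`. -/
lemma cdown_anti (A : PartialApprox L) {b b' : L} (h : b' ≤ b) : A.cdown b ≤ A.cdown b' := by
  apply le_sInf
  rintro z ⟨hzb', hz⟩
  have hzb : z ≤ b := hzb'.trans h
  -- least fixpoint of `A.A1 · b` below `z`
  set T : Set L := {w | w ≤ z ∧ A.A1 w b ≤ w} with hT
  have hzT : z ∈ T := ⟨le_rfl, by
    have := A.mono1 z b z b' hzb hzb' le_rfl h
    rw [hz] at this; exact this⟩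
  set w : L := sInf T with hw
  have hwz : w ≤ z := sInf_le hzT
  have hwb : w ≤ b := hwz.trans hzb
  have hpre : A.A1 w b ≤ w := by
    apply le_sInf
    rintro u ⟨huz, hu⟩
    exact (A.mono1 w b u b hwb (huz.trans hzb) (sInf_le ⟨huz, hu⟩) le_rfl).trans hu
  have hmem : A.A1 w b ∈ T := ⟨hpre.trans hwz,
    A.mono1 (A.A1 w b) b w b (hpre.trans hwb) hwb hpre le_rfl⟩
  have hfix : A.A1 w b = w := le_antisymm hpre (sInf_le hmem)
  exact (sInf_le (show w ∈ {z | z ≤ b ∧ A.A1 z b = z} from ⟨hwb, hfix⟩)).trans hwz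

theorem stmt11 (A : PartialApprox L) (S : Set (L × L))
    (hchain : IsChain precLE S) (hpr : ∀ p ∈ S, A.prudent p.1 p.2) :
    A.prudent (sSup (Prod.fst '' S)) (sInf (Prod.snd '' S)) := by
  set a : L := sSup (Prod.fst '' S)
  set b : L := sInf (Prod.snd '' S)
  have hfst : ∀ p ∈ S, p.1 ≤ a := fun p hp => le_sSup ⟨p, hp, rfl⟩
  have hsnd : ∀ p ∈ S, b ≤ p.2 := fun p hp => sInf_le ⟨p, hp, rfl⟩
  -- consistency
  have hab : a ≤ b := by
    apply sSup_le
    rintro x ⟨p, hp, rfl⟩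
    apply le_sInf
    rintro y ⟨q, hq, rfl⟩
    rcases eq_or_ne p q with rfl | hne
    · exact (hpr p hp).1.1
    · rcases hchain hp hq hne with ⟨h1, _⟩ | ⟨_, h2⟩
      · exact h1.trans (hpr q hq).1.1
      · exact (hpr p hp).1.1.trans h2
  refine ⟨⟨hab, ?_, ?_⟩, ?_⟩
  · -- a ≤ A1 a b
    apply sSup_le
    rintro x ⟨p, hp, rfl⟩
    obtain ⟨⟨hc, h1, _⟩, _⟩ := hpr p hp
    exact h1.trans (A.mono1 p.1 p.2 a b hc hab (hfst p hp) (hsnd p hp))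
  · -- A2 a b ≤ b
    apply le_sInf
    rintro y ⟨p, hp, rfl⟩
    obtain ⟨⟨hc, _, h2⟩, _⟩ := hpr p hp
    exact (A.mono2 p.1 p.2 a b hc hab (hfst p hp) (hsnd p hp)).trans h2
  · -- prudence
    apply sSup_le
    rintro x ⟨p, hp, rfl⟩
    exact (hpr p hp).2.trans (cdown_anti A (hsnd p hp))
end

section
/- Every partial approximation operator A on L^c has a least stable fixpoint (the well-founded fixpoint), i.e., there exists a stable fixpoint (a,b) of A such that (a,b) ≤_p (c,d) for every stable fixpoint (c,d) of A. -/
variable {L : Type*} [CompleteLattice L]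

namespace PartialApprox

variable {A : PartialApprox L} {a b p : L}

/-- Knaster–Tarski style: below any postfixpoint of `A.A1 (·, b)` (itself `≤ b`)
there is a fixpoint. -/
lemma exists_fix1_le (hpb : p ≤ b) (hpost : A.A1 p b ≤ p) :
    ∃ u, u ≤ p ∧ A.A1 u b = u := by
  set S : Set L := {z | z ≤ p ∧ A.A1 z b ≤ z} with hS
  have hpS : p ∈ S := ⟨le_rfl, hpost⟩
  have hup : sInf S ≤ p := sInf_le hpS
  have hpostu : A.A1 (sInf S) b ≤ sInf S := by
    refine le_sInf fun z hz => ?_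
    exact (A.mono1 (sInf S) b z b (hup.trans hpb) (hz.1.trans hpb) (sInf_le hz) le_rfl).trans hz.2
  have hmem : A.A1 (sInf S) b ∈ S :=
    ⟨hpostu.trans hup,
      A.mono1 (A.A1 (sInf S) b) b (sInf S) b ((hpostu.trans hup).trans hpb)
        (hup.trans hpb) hpostu le_rfl⟩
  exact ⟨sInf S, hup, le_antisymm hpostu (sInf_le hmem)⟩

lemma cdown_le_of_postfix (hpb : p ≤ b) (hpost : A.A1 p b ≤ p) : A.cdown b ≤ p := by
  obtain ⟨u, hup, hfix⟩ := exists_fix1_le hpb hpost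
  exact (sInf_le (show u ∈ {z | z ≤ b ∧ A.A1 z b = z} from ⟨hup.trans hpb, hfix⟩)).trans hup

/-- If `A.A1 (·, b)` has some postfixpoint below `b`, then `c↓(b)` is a genuine
fixpoint of `A.A1 (·, b)` below `b`. -/
lemma cdown_fix (hpb : p ≤ b) (hpost : A.A1 p b ≤ p) :
    A.cdown b ≤ b ∧ A.A1 (A.cdown b) b = A.cdown b := by
  have hmb : A.cdown b ≤ b := (cdown_le_of_postfix hpb hpost).trans hpb
  have hpostm : A.A1 (A.cdown b) b ≤ A.cdown b := by
    refine le_sInf fun z hz => ?_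
    exact (A.mono1 _ b z b hmb hz.1 (sInf_le hz) le_rfl).trans hz.2.le
  obtain ⟨u, hum, hfix⟩ := exists_fix1_le hmb hpostm
  have hmu : A.cdown b ≤ u :=
    sInf_le (show u ∈ {z | z ≤ b ∧ A.A1 z b = z} from ⟨hum.trans hmb, hfix⟩)
  have : u = A.cdown b := le_antisymm hum hmu
  exact ⟨hmb, this ▸ hfix⟩

lemma exists_fix2_le (hap : a ≤ p) (hpost : A.A2 a p ≤ p) (hdiag : a ≤ A.A1 a a) :
    ∃ u, a ≤ u ∧ u ≤ p ∧ A.A2 a u = u := by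
  have key : ∀ z, a ≤ z → a ≤ A.A2 a z := fun z hz =>
    (hdiag.trans (A.diag a).le).trans (A.mono2 a z a a hz le_rfl le_rfl hz)
  set S : Set L := {z | a ≤ z ∧ z ≤ p ∧ A.A2 a z ≤ z} with hS
  have hpS : p ∈ S := ⟨hap, le_rfl, hpost⟩
  have hau : a ≤ sInf S := le_sInf fun z hz => hz.1
  have hup : sInf S ≤ p := sInf_le hpS
  have hpostu : A.A2 a (sInf S) ≤ sInf S := by
    refine le_sInf fun z hz => ?_
    exact (A.mono2 a z a (sInf S) hz.1 hau le_rfl (sInf_le hz)).trans hz.2.2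
  have hmem : A.A2 a (sInf S) ∈ S :=
    ⟨key _ hau, hpostu.trans hup,
      A.mono2 a (sInf S) a (A.A2 a (sInf S)) hau (key _ hau) le_rfl hpostu⟩
  exact ⟨sInf S, hau, hup, le_antisymm hpostu (sInf_le hmem)⟩

/-- Under suitable conditions, `c↑(a)` is a genuine fixpoint of `A.A2 (a, ·)`. -/
lemma cup_fix (hap : a ≤ p) (hpost : A.A2 a p ≤ p) (hdiag : a ≤ A.A1 a a) :
    a ≤ A.cup a ∧ A.cup a ≤ p ∧ A.A2 a (A.cup a) = A.cup a := by
  obtain ⟨u, hau, hup, hfix⟩ := exists_fix2_le hap hpost hdiag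
  have han : a ≤ A.cup a := le_sInf fun z hz => hz.1
  have hnu : A.cup a ≤ u := sInf_le (show u ∈ {z | a ≤ z ∧ A.A2 a z = z} from ⟨hau, hfix⟩)
  have hpostn : A.A2 a (A.cup a) ≤ A.cup a := by
    refine le_sInf fun z hz => ?_
    exact (A.mono2 a z a (A.cup a) hz.1 han le_rfl (sInf_le hz)).trans hz.2.le
  obtain ⟨u', hau', hun', hfix'⟩ := exists_fix2_le han hpostn hdiag
  have : A.cup a ≤ u' := sInf_le (show u' ∈ {z | a ≤ z ∧ A.A2 a z = z} from ⟨hau', hfix'⟩)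
  have he : u' = A.cup a := le_antisymm hun' this
  exact ⟨han, hnu.trans hup, he ▸ hfix'⟩

lemma reliable.cdown_fix' (h : A.reliable a b) :
    A.cdown b ≤ b ∧ A.A1 (A.cdown b) b = A.cdown b := by
  refine cdown_fix le_rfl ?_
  calc A.A1 b b = A.A2 b b := A.diag b
    _ ≤ A.A2 a b := A.mono2 a b b b h.1 le_rfl h.1 le_rfl
    _ ≤ b := h.2.2

lemma reliable.diag_le (h : A.reliable a b) : a ≤ A.A1 a a :=
  h.2.1.trans (A.mono1 a b a a h.1 le_rfl le_rfl h.1)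

lemma reliable.cup_fix' (h : A.reliable a b) :
    a ≤ A.cup a ∧ A.cup a ≤ b ∧ A.A2 a (A.cup a) = A.cup a :=
  cup_fix h.1 h.2.2 h.diag_le

lemma cdown_antitone {b b' : L} (hb : b' ≤ b)
    (hfix : A.cdown b' ≤ b' ∧ A.A1 (A.cdown b') b' = A.cdown b') :
    A.cdown b ≤ A.cdown b' :=
  cdown_le_of_postfix (hfix.1.trans hb)
    ((A.mono1 (A.cdown b') b (A.cdown b') b' (hfix.1.trans hb) hfix.1 le_rfl hb).trans_eq hfix.2)

/-- The single revision step: from a prudent pair below all stable fixpoints, the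
revised pair `(c↓(b), c↑(c↓(b)))` is again prudent, below all stable fixpoints, and
more precise. -/
lemma step (hp : A.prudent a b) (hbs : ∀ c d, A.stableFix c d → a ≤ c ∧ d ≤ b) :
    (A.prudent (A.cdown b) (A.cup (A.cdown b)) ∧
      ∀ c d, A.stableFix c d → A.cdown b ≤ c ∧ d ≤ A.cup (A.cdown b)) ∧
    a ≤ A.cdown b ∧ A.cup (A.cdown b) ≤ b := by
  obtain ⟨hrel, hpr⟩ := hp
  set a' := A.cdown b with ha'
  obtain ⟨ha'b, ha'fix⟩ := hrel.cdown_fix'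
  -- (a', b) is reliable
  have hrel' : A.reliable a' b :=
    ⟨ha'b, ha'fix.ge, (A.mono2 a b a' b hrel.1 ha'b hpr le_rfl).trans hrel.2.2⟩
  set b' := A.cup a' with hb'
  obtain ⟨ha'b', hb'b, hb'fix⟩ := hrel'.cup_fix'
  -- (a', b') is reliable
  have hrel'' : A.reliable a' b' :=
    ⟨ha'b', ha'fix.ge.trans (A.mono1 a' b a' b' ha'b ha'b' le_rfl hb'b), hb'fix.le⟩
  -- (a', b') is prudent
  have hprud'' : A.prudent a' b' :=
    ⟨hrel'', cdown_antitone hb'b hrel''.cdown_fix'⟩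
  refine ⟨⟨hprud'', ?_⟩, hpr, hb'b⟩
  rintro c d ⟨hrelcd, hc, hd⟩
  obtain ⟨hac, hdb⟩ := hbs c d ⟨hrelcd, hc, hd⟩
  have hcd : c ≤ d := hrelcd.1
  have hcfix : A.A1 c d = c := by
    have := hrelcd.cdown_fix'.2
    rw [← hc] at this; exact this
  -- a' ≤ c
  have ha'c : a' ≤ c := by
    have hpostc : A.A1 c b ≤ c :=
      (A.mono1 c b c d (hcd.trans hdb) hcd le_rfl hdb).trans_eq hcfix
    exact cdown_le_of_postfix (hcd.trans hdb) hpostc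
  refine ⟨ha'c, ?_⟩
  -- next, c ≤ b'
  have hcb' : c ≤ b' := by
    set q := b' ⊓ d with hq
    have hqd : q ≤ d := inf_le_right
    have hqb' : q ≤ b' := inf_le_left
    have ha'q : a' ≤ q := le_inf ha'b' (ha'c.trans hcd)
    have h1 : A.A1 q d ≤ b' := by
      calc A.A1 q d ≤ A.A1 q q := A.mono1 q d q q hqd le_rfl le_rfl hqd
        _ = A.A2 q q := A.diag q
        _ ≤ A.A2 a' q := A.mono2 a' q q q ha'q le_rfl ha'q le_rfl
        _ ≤ A.A2 a' b' := A.mono2 a' b' a' q ha'b' ha'q le_rfl hqb'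
        _ = b' := hb'fix
    have h2 : A.A1 q d ≤ d := by
      calc A.A1 q d ≤ A.A1 d d := A.mono1 q d d d hqd le_rfl hqd le_rfl
        _ = A.A2 d d := A.diag d
        _ ≤ A.A2 c d := A.mono2 c d d d hcd le_rfl hcd le_rfl
        _ ≤ d := hrelcd.2.2
    have : A.cdown d ≤ q := cdown_le_of_postfix hqd (le_inf h1 h2)
    exact hc ▸ this.trans hqb'
  -- finally, d ≤ b'
  have hdiagc : c ≤ A.A1 c c :=
    hcfix.ge.trans (A.mono1 c d c c hcd le_rfl le_rfl hcd)
  have hpostc' : A.A2 c b' ≤ b' :=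
    (A.mono2 a' b' c b' ha'b' hcb' ha'c le_rfl).trans_eq hb'fix
  obtain ⟨u, hcu, hub', hufix⟩ := exists_fix2_le hcb' hpostc' hdiagc
  have : A.cup c ≤ u := sInf_le (show u ∈ {z | c ≤ z ∧ A.A2 c z = z} from ⟨hcu, hufix⟩)
  exact (hd ▸ this).trans hub'

end PartialApprox

theorem stmt12 (A : PartialApprox L) :
    ∃ a b : L, A.stableFix a b ∧ ∀ c d : L, A.stableFix c d → a ≤ c ∧ d ≤ b := by
  classical
  -- We work in the complete lattice `L × Lᵒᵈ`, whose order is the precision order.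
  set P : Set (L × Lᵒᵈ) :=
    {p | A.prudent p.1 (OrderDual.ofDual p.2) ∧
      ∀ c d, A.stableFix c d → p.1 ≤ c ∧ d ≤ OrderDual.ofDual p.2} with hP
  have hbase : ((⊥ : L), OrderDual.toDual (⊤ : L)) ∈ P :=
    ⟨⟨⟨bot_le, bot_le, le_top⟩, bot_le⟩, fun c d _ => ⟨bot_le, le_top⟩⟩
  -- Zorn's lemma: chains in `P` have upper bounds in `P`.
  have hub : ∀ c ⊆ P, IsChain (· ≤ ·) c → ∀ y ∈ c, ∃ ub ∈ P, ∀ z ∈ c, z ≤ ub := by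
    rintro c hcP hchain y hy
    set sa : L := sSup (Prod.fst '' c) with hsa
    set sb : L := sInf ((fun q : L × Lᵒᵈ => OrderDual.ofDual q.2) '' c) with hsb
    have hfst : ∀ q ∈ c, q.1 ≤ sa := fun q hq => le_sSup ⟨q, hq, rfl⟩
    have hsnd : ∀ q ∈ c, sb ≤ OrderDual.ofDual q.2 := fun q hq => sInf_le ⟨q, hq, rfl⟩
    -- consistency of the supremum
    have hcons : sa ≤ sb := by
      refine sSup_le ?_
      rintro x ⟨q, hq, rfl⟩
      refine le_sInf ?_
      rintro y' ⟨r, hr, rfl⟩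
      rcases eq_or_ne q r with rfl | hne
      · exact (hcP hq).1.1.1
      · rcases hchain hq hr hne with h | h
        · exact h.1.trans (hcP hr).1.1.1
        · exact ((hcP hq).1.1.1).trans h.2
    -- reliability of the supremum
    have hrel : A.reliable sa sb := by
      refine ⟨hcons, ?_, ?_⟩
      · refine sSup_le ?_
        rintro x ⟨q, hq, rfl⟩
        exact (hcP hq).1.1.2.1.trans
          (A.mono1 q.1 (OrderDual.ofDual q.2) sa sb (hcP hq).1.1.1 hcons (hfst q hq) (hsnd q hq))
      · refine le_sInf ?_
        rintro y' ⟨q, hq, rfl⟩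
        exact (A.mono2 q.1 (OrderDual.ofDual q.2) sa sb (hcP hq).1.1.1 hcons (hfst q hq)
          (hsnd q hq)).trans (hcP hq).1.1.2.2
    -- prudence of the supremum
    have hprud : A.prudent sa sb := by
      refine ⟨hrel, sSup_le ?_⟩
      rintro x ⟨q, hq, rfl⟩
      exact (hcP hq).1.2.trans (PartialApprox.cdown_antitone (hsnd q hq) hrel.cdown_fix')
    refine ⟨(sa, OrderDual.toDual sb), ⟨hprud, ?_⟩, ?_⟩
    · intro c' d' hs
      constructor
      · refine sSup_le ?_
        rintro x ⟨q, hq, rfl⟩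
        exact ((hcP hq).2 c' d' hs).1
      · refine le_sInf ?_
        rintro y' ⟨q, hq, rfl⟩
        exact ((hcP hq).2 c' d' hs).2
    · intro z hz
      exact ⟨hfst z hz, hsnd z hz⟩
  obtain ⟨m, -, hmP, hmax⟩ := zorn_le_nonempty₀ P hub _ hbase
  -- The maximal element is a stable fixpoint.
  set a := m.1 with ha
  set b := OrderDual.ofDual m.2 with hb
  obtain ⟨hstep, ha', hb'⟩ := PartialApprox.step hmP.1 hmP.2
  have hRmem : (A.cdown b, OrderDual.toDual (A.cup (A.cdown b))) ∈ P := hstep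
  have hle : m ≤ (A.cdown b, OrderDual.toDual (A.cup (A.cdown b))) := ⟨ha', hb'⟩
  have hge := hmax hRmem hle
  have heq1 : a = A.cdown b := le_antisymm ha' hge.1
  have heq2 : b = A.cup (A.cdown b) := le_antisymm hge.2 hb'
  refine ⟨a, b, ⟨hmP.1.1, heq1, by rw [heq2, ← heq1]⟩, fun c d hs => hmP.2 c d hs⟩
end

section
/- The well-founded fixpoint of a partial approximation operator A is at least as precise as its Kripke-Kleene fixpoint: KK(A) ≤_p WF(A), where KK(A) is the least fixpoint of A on (L^c, ≤_p) and WF(A) is the least stable fixpoint of A. -/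
variable {L : Type*} [CompleteLattice L]

theorem stmt13 (A : PartialApprox L) (k1 k2 w1 w2 : L)
    (hkfix : k1 ≤ k2 ∧ A.A1 k1 k2 = k1 ∧ A.A2 k1 k2 = k2)
    (hkleast : ∀ x y : L, x ≤ y → A.A1 x y = x → A.A2 x y = y → k1 ≤ x ∧ y ≤ k2)
    (hw : A.stableFix w1 w2)
    (hwleast : ∀ x y : L, A.stableFix x y → w1 ≤ x ∧ y ≤ w2) :
    k1 ≤ w1 ∧ w2 ≤ k2 := by
  obtain ⟨⟨hw12, hr1, hr2⟩, hcd, hcu⟩ := hw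
  -- A1 w1 w2 = w1
  have hA1fix : A.A1 w1 w2 = w1 := by
    have hle : A.A1 w1 w2 ≤ A.cdown w2 := by
      apply le_sInf
      rintro z ⟨hzw2, hzfix⟩
      have hw1z : w1 ≤ z := hcd ▸ sInf_le ⟨hzw2, hzfix⟩
      calc A.A1 w1 w2 ≤ A.A1 z w2 := A.mono1 w1 w2 z w2 hw12 hzw2 hw1z le_rfl
        _ = z := hzfix
    exact le_antisymm (le_trans hle hcd.ge) hr1
  -- A2 w1 w2 = w2
  have hA2fix : A.A2 w1 w2 = w2 := by
    set P : Set L := {z | w1 ≤ z ∧ A.A2 w1 z ≤ z} with hP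
    set p : L := sInf P with hp
    have hw2P : w2 ∈ P := ⟨hw12, hr2⟩
    have hpw2 : p ≤ w2 := sInf_le hw2P
    have hw1p : w1 ≤ p := le_sInf (fun z hz => hz.1)
    have hApp : A.A2 w1 p ≤ p := by
      apply le_sInf
      rintro z ⟨hw1z, hz⟩
      have hpz : p ≤ z := sInf_le ⟨hw1z, hz⟩
      exact le_trans (A.mono2 w1 z w1 p hw1z hw1p le_rfl hpz) hz
    have hw1q : w1 ≤ A.A2 w1 p :=
      le_trans hr1 (le_trans (A.mono1 w1 w2 w1 p hw12 hw1p le_rfl hpw2)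
        (A.cons w1 p hw1p))
    have hqP : A.A2 w1 p ∈ P := by
      refine ⟨hw1q, ?_⟩
      exact A.mono2 w1 p w1 (A.A2 w1 p) hw1p hw1q le_rfl hApp
    have hpq : p ≤ A.A2 w1 p := sInf_le hqP
    have hpfix : A.A2 w1 p = p := le_antisymm hApp hpq
    have hw2p : w2 ≤ p := hcu ▸ sInf_le ⟨hw1p, hpfix⟩
    have : p = w2 := le_antisymm hpw2 hw2p
    rw [← this, hpfix]
  exact hkleast w1 w2 hw12 hA1fix hA2fix
end

section
/- Let A, B be partial approximation operators on L^c with A ≤_p B (i.e., A(x,y) ≤_p B(x,y) for all (x,y) ∈ L^c). If (a,b) is A-prudent then (a,b) is B-prudent and (c↓_A(b), c↑_A(a)) ≤_p (c↓_B(b), c↑_B(a)). -/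
variable {L : Type*} [CompleteLattice L]

lemma cdown_le_prefix (A : PartialApprox L) {a b : L} (hr : A.reliable a b)
    {z : L} (hzb : z ≤ b) (hz : A.A1 z b ≤ z) : A.cdown b ≤ z := by
  obtain ⟨hab, _, h2⟩ := hr
  set P : Set L := {w | w ≤ b ∧ A.A1 w b ≤ w} with hP
  set m : L := sInf P with hm
  have hbP : b ∈ P := ⟨le_rfl, by
    rw [A.diag b]
    exact le_trans (A.mono2 a b b b hab le_rfl hab le_rfl) h2⟩
  have hmb : m ≤ b := sInf_le hbP
  have hmono : ∀ u v, u ≤ v → v ≤ b → A.A1 u b ≤ A.A1 v b := fun u v huv hvb =>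
    A.mono1 u b v b (le_trans huv hvb) hvb huv le_rfl
  have hFm : A.A1 m b ≤ m := by
    apply le_sInf
    intro w hw
    exact le_trans (hmono m w (sInf_le hw) hw.1) hw.2
  have hmF : m ≤ A.A1 m b := by
    apply sInf_le
    exact ⟨le_trans hFm hmb, hmono _ _ hFm hmb⟩
  have hfix : A.A1 m b = m := le_antisymm hFm hmF
  exact le_trans (sInf_le ⟨hmb, hfix⟩) (sInf_le ⟨hzb, hz⟩)

lemma cup_le_prefix (A : PartialApprox L) {a b : L} (hr : A.reliable a b)
    {z : L} (haz : a ≤ z) (hz : A.A2 a z ≤ z) : A.cup a ≤ z := by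
  obtain ⟨hab, h1, _⟩ := hr
  set P : Set L := {w | a ≤ w ∧ A.A2 a w ≤ w} with hP
  set m : L := sInf P with hm
  have hmono : ∀ u v, u ≤ v → a ≤ u → A.A2 a u ≤ A.A2 a v := fun u v huv hau =>
    A.mono2 a v a u (le_trans hau huv) hau le_rfl huv
  have haG : ∀ w, a ≤ w → a ≤ A.A2 a w := fun w hw => by
    calc a ≤ A.A1 a b := h1
    _ ≤ A.A1 a a := A.mono1 a b a a hab le_rfl le_rfl hab
    _ = A.A2 a a := A.diag a
    _ ≤ A.A2 a w := A.mono2 a w a a hw le_rfl le_rfl hw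
  have hzP : z ∈ P := ⟨haz, hz⟩
  have ham : a ≤ m := le_sInf fun w hw => hw.1
  have hGm : A.A2 a m ≤ m := by
    apply le_sInf
    intro w hw
    exact le_trans (hmono m w (sInf_le hw) ham) hw.2
  have hmG : m ≤ A.A2 a m := by
    apply sInf_le
    exact ⟨haG m ham, hmono _ _ hGm (haG m ham)⟩
  exact le_trans (sInf_le ⟨ham, le_antisymm hGm hmG⟩) (sInf_le hzP)

theorem stmt14 (A B : PartialApprox L)
    (hAB : ∀ x y : L, x ≤ y → A.A1 x y ≤ B.A1 x y ∧ B.A2 x y ≤ A.A2 x y)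
    (a b : L) (h : A.prudent a b) :
    B.prudent a b ∧ A.cdown b ≤ B.cdown b ∧ B.cup a ≤ A.cup a := by
  obtain ⟨⟨hab, h1, h2⟩, hpr⟩ := h
  have hrA : A.reliable a b := ⟨hab, h1, h2⟩
  have hrB : B.reliable a b :=
    ⟨hab, le_trans h1 (hAB a b hab).1, le_trans (hAB a b hab).2 h2⟩
  have hcd : A.cdown b ≤ B.cdown b := by
    apply le_sInf
    intro z hz
    exact cdown_le_prefix A hrA hz.1 (le_trans (hAB z b hz.1).1 hz.2.le)
  have hcu : B.cup a ≤ A.cup a := by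
    apply le_sInf
    intro z hz
    exact cup_le_prefix B hrB hz.1 (le_trans (hAB a z hz.1).2 hz.2.le)
  exact ⟨⟨hrB, le_trans hpr hcd⟩, hcd, hcu⟩
end

section
/- Let O be an operator on a complete lattice L and A, B partial approximations of O with A ≤_p B. If x ∈ L is an A-stable fixpoint of O (i.e., (x,x) is a stable fixpoint of A), then x is a B-stable fixpoint of O. -/
variable {L : Type*} [CompleteLattice L]

theorem stmt16 (O : L → L) (A B : PartialApprox L)
    (hAO : ∀ x : L, A.A1 x x = O x) (hBO : ∀ x : L, B.A1 x x = O x)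
    (hAB : ∀ x y : L, x ≤ y → A.A1 x y ≤ B.A1 x y ∧ B.A2 x y ≤ A.A2 x y)
    (x : L) (h : A.stableFix x x) :
    B.stableFix x x := by
  obtain ⟨⟨hxx, h1, h2⟩, hcd, hcu⟩ := h
  -- x is a fixpoint of A on the diagonal
  have hA1 : A.A1 x x = x := le_antisymm ((A.diag x) ▸ h2) h1
  have hA2 : A.A2 x x = x := (A.diag x) ▸ hA1
  have hB1 : B.A1 x x = x := by rw [hBO, ← hAO, hA1]
  have hB2 : B.A2 x x = x := (B.diag x) ▸ hB1
  -- key: x is below every z ≤ x with B.A1 z x = z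
  have key : ∀ z : L, z ≤ x → B.A1 z x = z → x ≤ z := by
    intro z hzx hz
    -- m := least prefixpoint of A.A1 (·, x) below x
    set S : Set L := {u | u ≤ x ∧ A.A1 u x ≤ u} with hS
    set m : L := sInf S with hm
    have hmx : m ≤ x := sInf_le ⟨le_rfl, hA1.le⟩
    have hpre : A.A1 m x ≤ m := by
      apply le_sInf
      intro u hu
      exact le_trans (A.mono1 m x u x hmx hu.1 (sInf_le hu) le_rfl) hu.2
    have hfix : A.A1 m x = m := by
      refine le_antisymm hpre (sInf_le ⟨le_trans hpre hmx, ?_⟩)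
      exact A.mono1 (A.A1 m x) x m x (le_trans hpre hmx) hmx hpre le_rfl
    -- x = A.cdown x ≤ m
    have hxm : x ≤ m := by
      rw [hcd]
      exact sInf_le ⟨hmx, hfix⟩
    -- m ≤ z since z is a prefixpoint of A.A1 (·, x)
    have hAz : A.A1 z x ≤ z := le_trans (hAB z x hzx).1 hz.le
    exact le_trans hxm (sInf_le ⟨hzx, hAz⟩)
  refine ⟨⟨le_rfl, hB1.ge, hB2.le⟩, ?_, ?_⟩
  · refine le_antisymm (le_sInf fun z hz => key z hz.1 hz.2) (sInf_le ⟨le_rfl, hB1⟩)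
  · exact le_antisymm (le_sInf fun z hz => hz.1) (sInf_le ⟨le_rfl, hB2⟩)
end

section
/- Let O be an operator on a complete lattice L. Define U_O on consistent pairs by U_O(x,y) = (glb(O([x,y])), lub(O([x,y]))), where O([x,y]) = {O(z) : x ≤ z ≤ y}. Then U_O is a partial approximation of O and is the greatest element (with respect to pointwise ≤_p) among all partial approximations of O. -/
variable {L : Type*} [CompleteLattice L]

theorem stmt17 (O : L → L) :
    (∀ x y : L, x ≤ y → sInf (O '' Set.Icc x y) ≤ sSup (O '' Set.Icc x y)) ∧
    (∀ x y x' y' : L, x ≤ y → x' ≤ y' → x ≤ x' → y' ≤ y →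
      sInf (O '' Set.Icc x y) ≤ sInf (O '' Set.Icc x' y') ∧
      sSup (O '' Set.Icc x' y') ≤ sSup (O '' Set.Icc x y)) ∧
    (∀ x : L, sInf (O '' Set.Icc x x) = O x ∧ sSup (O '' Set.Icc x x) = O x) ∧
    (∀ B : PartialApprox L, (∀ x : L, B.A1 x x = O x) →
      ∀ x y : L, x ≤ y → B.A1 x y ≤ sInf (O '' Set.Icc x y) ∧
        sSup (O '' Set.Icc x y) ≤ B.A2 x y) := by
  refine ⟨?_, ?_, ?_, ?_⟩
  · intro x y hxy
    have hx : O x ∈ O '' Set.Icc x y := ⟨x, ⟨le_rfl, hxy⟩, rfl⟩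
    exact (sInf_le hx).trans (le_sSup hx)
  · intro x y x' y' _ _ hxx hyy
    have hsub : Set.Icc x' y' ⊆ Set.Icc x y := Set.Icc_subset_Icc hxx hyy
    exact ⟨sInf_le_sInf (Set.image_mono hsub), sSup_le_sSup (Set.image_mono hsub)⟩
  · intro x
    simp [Set.Icc_self]
  · intro B hB x y hxy
    constructor
    · apply le_sInf
      rintro _ ⟨z, ⟨hz1, hz2⟩, rfl⟩
      have := B.mono1 x y z z hxy le_rfl hz1 hz2
      rwa [hB] at this
    · apply sSup_le
      rintro _ ⟨z, ⟨hz1, hz2⟩, rfl⟩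
      have := B.mono2 x y z z hxy le_rfl hz1 hz2
      rwa [← B.diag, hB] at this
end

section
/- If O is a monotone operator on a complete lattice L, then the pair (lfp(O), lfp(O)) is a stable fixpoint of the ultimate approximation U_O, and it is the unique exact stable fixpoint: x ∈ L is an ultimate stable fixpoint of O if and only if x = lfp(O). -/
variable {L : Type*} [CompleteLattice L]

theorem stmt19 (O : L → L) (hO : Monotone O) (U : PartialApprox L)
    (hU : ∀ x y : L, x ≤ y →
      U.A1 x y = sInf (O '' Set.Icc x y) ∧ U.A2 x y = sSup (O '' Set.Icc x y)) :
    U.stableFix (sInf {x : L | O x ≤ x}) (sInf {x : L | O x ≤ x}) ∧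
    (∀ x : L, U.stableFix x x ↔ x = sInf {x : L | O x ≤ x}) := by
  set l := sInf {x : L | O x ≤ x} with hl
  -- A1 x y = O x, A2 x y = O y for x ≤ y
  have hA1 : ∀ x y : L, x ≤ y → U.A1 x y = O x := by
    intro x y hxy
    rw [(hU x y hxy).1]
    refine le_antisymm (sInf_le ⟨x, ⟨le_refl x, hxy⟩, rfl⟩) (le_sInf ?_)
    rintro _ ⟨w, ⟨hw1, _⟩, rfl⟩
    exact hO hw1
  have hA2 : ∀ x y : L, x ≤ y → U.A2 x y = O y := by
    intro x y hxy
    rw [(hU x y hxy).2]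
    refine le_antisymm (sSup_le ?_) (le_sSup ⟨y, ⟨hxy, le_refl y⟩, rfl⟩)
    rintro _ ⟨w, ⟨_, hw2⟩, rfl⟩
    exact hO hw2
  -- l is a fixpoint of O (Knaster–Tarski)
  have hpre : O l ≤ l := by
    refine le_sInf fun x hx => le_trans (hO (sInf_le hx)) hx
  have hfix : O l = l := le_antisymm hpre (sInf_le (hO hpre))
  have hle : ∀ x : L, O x = x → l ≤ x := fun x hx => sInf_le (le_of_eq hx)
  have keyl : U.stableFix l l := by
    refine ⟨⟨le_refl l, ?_, ?_⟩, ?_, ?_⟩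
    · rw [hA1 l l (le_refl l), hfix]
    · rw [hA2 l l (le_refl l), hfix]
    · refine le_antisymm (le_sInf ?_) (sInf_le ⟨le_refl l, by rw [hA1 l l (le_refl l), hfix]⟩)
      rintro z ⟨hz1, hz2⟩
      rw [hA1 z l hz1] at hz2
      exact hle z hz2
    · refine le_antisymm (le_sInf ?_) (sInf_le ⟨le_refl l, by rw [hA2 l l (le_refl l), hfix]⟩)
      rintro z ⟨hz1, _⟩
      exact hz1
  refine ⟨keyl, fun x => ⟨fun hx => ?_, fun hx => hx ▸ keyl⟩⟩
  obtain ⟨⟨_, hr1, hr2⟩, hcd, _⟩ := hx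
  rw [hA1 x x (le_refl x)] at hr1
  rw [hA2 x x (le_refl x)] at hr2
  have hxfix : O x = x := le_antisymm hr2 hr1
  refine le_antisymm ?_ (hle x hxfix)
  calc x = U.cdown x := hcd
    _ ≤ l := sInf_le ⟨hle x hxfix, by rw [hA1 l x (hle x hxfix), hfix]⟩
end
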